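/- arXiv:1808.07628 — 4 statements merged into one kernel-verified Lean document; each statement's English description precedes it below -/
import Mathlib

section
/- Let n ≥ 1 and let A be a real symmetric (n+1)×(n+1) matrix, written in block form with upper-left n×n block A₁, last column vector b (so b i = A i n for i < n), last row bᵀ, and lower-right entry d = A n n with d < 0. Let D be the n×n Schur complement, D i j = A₁ i j − (b i * b j)/d. Then A is Hurwitz (every complex eigenvalue of A has negative real part) if and only if D is Hurwitz. (Note D is again symmetric.) -/
/-!
For symmetric `A` the complexification is Hermitian, so its spectrum is real and coincides with
the real spectrum of `A`; hence `A` is Hurwitz iff `-A` is positive definite. Moving the last index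
into a `1 × 1` block, `-D` is the Schur complement of the positive entry `-d` in `-A`. A Hermitian
block matrix whose lower-right block is positive definite is positive semidefinite iff its Schur
complement is, and the factorisation `det (fromBlocks ..) = det (-d) * det (-D)` upgrades this to
positive definiteness.
-/

open Matrix

/-- A real square matrix is Hurwitz if every eigenvalue of its complexification
has negative real part. -/
def IsHurwitz {n : ℕ} (M : Matrix (Fin n) (Fin n) ℝ) : Prop :=
  ∀ μ ∈ spectrum ℂ (M.map (fun x => (x : ℂ))), μ.re < 0

open scoped ComplexOrder

namespace Matrix

theorem posDef_submatrix_equiv {m n R : Type*} [Fintype m] [CommRing R] [PartialOrder R]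
    [StarRing R] {M : Matrix n n R} (e : m ≃ n) :
    (M.submatrix e e).PosDef ↔ M.PosDef :=
  ⟨fun h => by simpa using h.submatrix e.symm.injective, fun h => h.submatrix e.injective⟩

variable {n : Type*} [Fintype n] [DecidableEq n]

theorem algebraMap_mem_spectrum_map_iff {K L : Type*} [Field K] [Field L] [Algebra K L]
    (M : Matrix n n K) (r : K) :
    algebraMap K L r ∈ spectrum L (M.map (algebraMap K L)) ↔ r ∈ spectrum K M := by
  rw [mem_spectrum_iff_isRoot_charpoly, mem_spectrum_iff_isRoot_charpoly, charpoly_map,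
    Polynomial.isRoot_map_iff (algebraMap K L).injective]

theorem IsSymm.spectrum_map_ofReal {M : Matrix n n ℝ} (hM : M.IsSymm) :
    spectrum ℂ (M.map fun x : ℝ => (x : ℂ)) = (fun r : ℝ => (r : ℂ)) '' spectrum ℝ M := by
  have hMc : (M.map fun x : ℝ => (x : ℂ)).IsHermitian :=
    (isHermitian_iff_isSymm.mpr hM).map _ fun _ => by simp
  ext μ
  constructor
  · intro hμ
    obtain ⟨r, -, rfl⟩ := hMc.spectrum_eq_image_range ▸ hμ
    exact ⟨r, (algebraMap_mem_spectrum_map_iff (L := ℂ) M r).mp hμ, rfl⟩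
  · rintro ⟨r, hr, rfl⟩
    exact (algebraMap_mem_spectrum_map_iff (L := ℂ) M r).mpr hr

theorem IsSymm.isHurwitz_iff_posDef_neg {m : ℕ} {M : Matrix (Fin m) (Fin m) ℝ} (hM : M.IsSymm) :
    IsHurwitz M ↔ (-M).PosDef := by
  have hneg : (-M).IsHermitian := isHermitian_iff_isSymm.mpr hM.neg
  rw [IsHurwitz, hM.spectrum_map_ofReal, hneg.posDef_iff_eigenvalues_pos,
    ← Set.forall_mem_range (p := fun r => 0 < r), ← hneg.spectrum_real_eq_range_eigenvalues,
    ← spectrum.neg_eq]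
  simp only [Set.forall_mem_image, Complex.ofReal_re, Set.mem_neg]
  exact ⟨fun h r hr => by simpa only [Left.neg_neg_iff] using h hr,
    fun h r hr => by simpa using h (-r) (by simpa)⟩

theorem posDef_iff_posSemidef_and_det_ne_zero {𝕜 : Type*} [RCLike 𝕜] {M : Matrix n n 𝕜} :
    M.PosDef ↔ M.PosSemidef ∧ M.det ≠ 0 :=
  ⟨fun h => ⟨h.posSemidef, ((isUnit_iff_isUnit_det M).mp h.isUnit).ne_zero⟩,
    fun h => h.1.posDef_iff_det_ne_zero.mpr h.2⟩

theorem posDef_fromBlocks₂₂_iff {𝕜 m : Type*} [RCLike 𝕜] [Fintype m] [DecidableEq m]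
    (A : Matrix m m 𝕜) (B : Matrix m n 𝕜) {D : Matrix n n 𝕜} (hD : D.PosDef) [Invertible D] :
    (fromBlocks A B Bᴴ D).PosDef ↔ (A - B * D⁻¹ * Bᴴ).PosDef := by
  rw [posDef_iff_posSemidef_and_det_ne_zero, posDef_iff_posSemidef_and_det_ne_zero,
    PosDef.fromBlocks₂₂ A B hD, det_fromBlocks₂₂, invOf_eq_nonsing_inv, mul_ne_zero_iff,
    and_iff_right (posDef_iff_posSemidef_and_det_ne_zero.mp hD).2]

theorem posDef_iff_posDef_schurComplement_last {m : ℕ}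
    {A : Matrix (Fin (m + 1)) (Fin (m + 1)) ℝ} (hA : A.IsSymm)
    (hd : 0 < A (Fin.last m) (Fin.last m)) :
    A.PosDef ↔ (of fun i j : Fin m => A i.castSucc j.castSucc -
      A i.castSucc (Fin.last m) * A j.castSucc (Fin.last m) / A (Fin.last m) (Fin.last m)).PosDef := by
  set d := A (Fin.last m) (Fin.last m)
  let B : Matrix (Fin m) (Fin 1) ℝ := of fun i _ => A i.castSucc (Fin.last m)
  have hlast (j : Fin 1) : (finSumFinEquiv (Sum.inr j) : Fin (m + 1)) = Fin.last m := by
    ext; simp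
  have hblock : A.submatrix finSumFinEquiv finSumFinEquiv =
      fromBlocks (A.submatrix Fin.castSucc Fin.castSucc) B Bᴴ (diagonal fun _ => d) := by
    ext (i | i) (j | j)
    · rfl
    · simp only [submatrix_apply, finSumFinEquiv_apply_left, hlast, fromBlocks_apply₁₂, of_apply, B]
      rfl
    · simp only [submatrix_apply, finSumFinEquiv_apply_left, hlast, fromBlocks_apply₂₁,
        conjTranspose_eq_transpose_of_trivial, transpose_apply, of_apply, B]
      exact hA.apply _ _
    · simp [hlast, d, Subsingleton.elim i j]
  have hdiag : (diagonal fun _ : Fin 1 => d).PosDef := posDef_diagonal_iff.mpr fun _ => hd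
  have := hdiag.isUnit.invertible
  rw [← posDef_submatrix_equiv finSumFinEquiv, hblock, posDef_fromBlocks₂₂_iff _ _ hdiag]
  congr! 1
  ext i j
  simp only [of_apply, sub_apply, submatrix_apply, mul_apply, conjTranspose_eq_transpose_of_trivial,
    transpose_apply, inv_subsingleton, diagonal_apply_eq, Ring.inverse_eq_inv', Finset.univ_unique,
    Finset.sum_singleton, B]
  ring

end Matrix

theorem schur_complement_hurwitz_symmetric_general
    (n : ℕ)
    (A : Matrix (Fin (n + 1)) (Fin (n + 1)) ℝ)
    (hsymm : A.IsSymm)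
    (hd : A (Fin.last n) (Fin.last n) < 0)
    (D : Matrix (Fin n) (Fin n) ℝ)
    (hD : ∀ i j : Fin n,
      D i j = A i.castSucc j.castSucc -
        (A i.castSucc (Fin.last n) * A j.castSucc (Fin.last n)) /
          A (Fin.last n) (Fin.last n)) :
    IsHurwitz A ↔ IsHurwitz D := by
  have hDsymm : D.IsSymm := by
    ext i j
    simp only [transpose_apply, hD, hsymm.apply i.castSucc j.castSucc]
    ring
  rw [hsymm.isHurwitz_iff_posDef_neg, hDsymm.isHurwitz_iff_posDef_neg,
    posDef_iff_posDef_schurComplement_last hsymm.neg (by simpa using hd)]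
  congr! 1
  ext i j
  simp only [Matrix.neg_apply, of_apply, hD]
  ring

theorem schur_complement_hurwitz_symmetric
    (n : ℕ) (hn : 1 ≤ n)
    (A : Matrix (Fin (n + 1)) (Fin (n + 1)) ℝ)
    (hsymm : A.IsSymm)
    (hd : A (Fin.last n) (Fin.last n) < 0)
    (D : Matrix (Fin n) (Fin n) ℝ)
    (hD : ∀ i j : Fin n,
      D i j = A i.castSucc j.castSucc -
        (A i.castSucc (Fin.last n) * A j.castSucc (Fin.last n)) /
          A (Fin.last n) (Fin.last n)) :
    IsHurwitz A ↔ IsHurwitz D :=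
  schur_complement_hurwitz_symmetric_general n A hsymm hd D hD
end

section
/- Let n ≥ 1 and let A be a real (n+1)×(n+1) Metzler matrix (all off-diagonal entries nonnegative) whose lower-right entry d = A n n is negative. Let D be the n×n Schur complement with entries D i j = A i j − (A i n * A n j)/d for i, j < n. Then A is Hurwitz (every complex eigenvalue of A has negative real part) if and only if D is Hurwitz. -/
open Matrix

/-- A real square matrix is Metzler if all its off-diagonal entries are nonnegative. -/
def IsMetzler {n : ℕ} (M : Matrix (Fin n) (Fin n) ℝ) : Prop :=
  ∀ i j, i ≠ j → 0 ≤ M i j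

private lemma pow_entry_nonneg {m : ℕ} {C : Matrix (Fin m) (Fin m) ℝ}
    (h0 : ∀ i j, 0 ≤ C i j) : ∀ t i j, 0 ≤ (C ^ t) i j := by
  intro t
  induction t with
  | zero =>
    intro i j
    rw [pow_zero]
    by_cases h : i = j <;> simp [Matrix.one_apply, h]
  | succ t ih =>
    intro i j
    rw [pow_succ, Matrix.mul_apply]
    exact Finset.sum_nonneg fun k _ => mul_nonneg (ih i k) (h0 k j)

private lemma pow_entry_le {m : ℕ} {C : Matrix (Fin m) (Fin m) ℝ} {K : ℝ} (hK0 : 0 ≤ K)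
    (h0 : ∀ i j, 0 ≤ C i j) (h1 : ∀ i j, C i j ≤ K) :
    ∀ t i j, (C ^ t) i j ≤ ((m : ℝ) * K) ^ t := by
  intro t
  induction t with
  | zero =>
    intro i j
    rw [pow_zero, pow_zero]
    by_cases h : i = j <;> simp [Matrix.one_apply, h]
  | succ t ih =>
    intro i j
    rw [pow_succ, Matrix.mul_apply]
    calc ∑ k, (C ^ t) i k * C k j ≤ ∑ _k : Fin m, ((m:ℝ)*K)^t * K := by
          apply Finset.sum_le_sum
          intro k _
          exact mul_le_mul (ih i k) (h1 k j) (h0 k j) (by positivity)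
      _ = ((m:ℝ)*K)^(t+1) := by
          rw [Finset.sum_const, Finset.card_univ, Fintype.card_fin, nsmul_eq_mul]
          ring

private lemma nonneg_of_left_rec {m : ℕ} {B C R : Matrix (Fin m) (Fin m) ℝ} {K : ℝ}
    (hK0 : 0 ≤ K) (hB : ∀ i j, 0 ≤ B i j) (hC0 : ∀ i j, 0 ≤ C i j)
    (hCK : ∀ i j, C i j ≤ K) (hK : (m : ℝ) * K < 1)
    (hR : R = B + C * R) : ∀ i j, 0 ≤ R i j := by
  have iter : ∀ t : ℕ, R = (∑ k ∈ Finset.range t, C ^ k) * B + C ^ t * R := by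
    intro t
    induction t with
    | zero => simp
    | succ t ih =>
      calc R = (∑ k ∈ Finset.range t, C ^ k) * B + C ^ t * R := ih
        _ = (∑ k ∈ Finset.range t, C ^ k) * B + C ^ t * (B + C * R) := by rw [← hR]
        _ = (∑ k ∈ Finset.range (t+1), C ^ k) * B + C ^ (t+1) * R := by
            rw [Finset.sum_range_succ, pow_succ]
            noncomm_ring
  intro i j
  set Q := ∑ k : Fin m, ∑ l : Fin m, |R k l| with hQdef
  have hQ0 : 0 ≤ Q := Finset.sum_nonneg fun k _ => Finset.sum_nonneg fun l _ => abs_nonneg _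
  have hQb : ∀ k l, |R k l| ≤ Q := by
    intro k l
    calc |R k l| ≤ ∑ l : Fin m, |R k l| :=
          Finset.single_le_sum (f := fun l => |R k l|) (fun l _ => abs_nonneg _) (Finset.mem_univ l)
      _ ≤ Q := Finset.single_le_sum (f := fun k => ∑ l : Fin m, |R k l|)
          (fun k _ => Finset.sum_nonneg fun l _ => abs_nonneg _) (Finset.mem_univ k)
  have key : ∀ t : ℕ, -(((m:ℝ)*K)^t * ((m:ℝ) * Q)) ≤ R i j := by
    intro t
    have hRij : R i j = ((∑ k ∈ Finset.range t, C ^ k) * B) i j + (C ^ t * R) i j := by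
      conv_lhs => rw [iter t]
      rw [Matrix.add_apply]
    have h1 : 0 ≤ ((∑ k ∈ Finset.range t, C ^ k) * B) i j := by
      rw [Matrix.mul_apply]
      apply Finset.sum_nonneg
      intro k _
      apply mul_nonneg _ (hB k j)
      rw [Matrix.sum_apply]
      exact Finset.sum_nonneg fun s _ => pow_entry_nonneg hC0 s i k
    have h2 : |(C ^ t * R) i j| ≤ ((m:ℝ)*K)^t * ((m:ℝ) * Q) := by
      rw [Matrix.mul_apply]
      calc |∑ k, (C ^ t) i k * R k j| ≤ ∑ k, |(C ^ t) i k * R k j| :=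
            Finset.abs_sum_le_sum_abs _ _
        _ ≤ ∑ _k : Fin m, ((m:ℝ)*K)^t * Q := by
            apply Finset.sum_le_sum
            intro k _
            rw [abs_mul, abs_of_nonneg (pow_entry_nonneg hC0 t i k)]
            exact mul_le_mul (pow_entry_le hK0 hC0 hCK t i k) (hQb k j) (abs_nonneg _)
              (by positivity)
        _ = ((m:ℝ)*K)^t * ((m:ℝ) * Q) := by
            rw [Finset.sum_const, Finset.card_univ, Fintype.card_fin, nsmul_eq_mul]
            ring
    have := neg_abs_le ((C ^ t * R) i j)
    linarith
  have hlim : Filter.Tendsto (fun t : ℕ => -(((m:ℝ)*K)^t * ((m:ℝ) * Q)))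
      Filter.atTop (nhds 0) := by
    have h := tendsto_pow_atTop_nhds_zero_of_lt_one
      (mul_nonneg (Nat.cast_nonneg m) hK0) hK
    have := (h.mul_const ((m:ℝ) * Q)).neg
    simpa using this
  have := le_of_tendsto hlim (Filter.Eventually.of_forall fun t => key t)
  -- this : 0 ≤ R i j ?  le_of_tendsto : Tendsto f l (𝓝 a) → (∀ᶠ f c ≤ b) → a ≤ b
  exact this

private lemma nonneg_of_right_rec {m : ℕ} {B C R : Matrix (Fin m) (Fin m) ℝ} {K : ℝ}
    (hK0 : 0 ≤ K) (hB : ∀ i j, 0 ≤ B i j) (hC0 : ∀ i j, 0 ≤ C i j)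
    (hCK : ∀ i j, C i j ≤ K) (hK : (m : ℝ) * K < 1)
    (hR : R = B + R * C) : ∀ i j, 0 ≤ R i j := by
  have h := nonneg_of_left_rec (B := Bᵀ) (C := Cᵀ) (R := Rᵀ) hK0
    (fun i j => hB j i) (fun i j => hC0 j i) (fun i j => hCK j i) hK
    (by rw [← transpose_mul, ← transpose_add, ← hR])
  intro i j
  exact h j i


private lemma resolvent_nonneg {m : ℕ} (N : Matrix (Fin m) (Fin m) ℝ)
    (hN : ∀ i j, 0 ≤ N i j) (t : ℝ)
    (hdet : ∀ lam : ℝ, t ≤ lam → ((lam • 1 : Matrix (Fin m) (Fin m) ℝ) - N).det ≠ 0) :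
    ∀ lam : ℝ, t ≤ lam → ∀ i j, 0 ≤ ((lam • 1 - N)⁻¹ : Matrix (Fin m) (Fin m) ℝ) i j := by
  set good : ℝ → Prop :=
    fun lam => ∀ i j, 0 ≤ ((lam • 1 - N)⁻¹ : Matrix (Fin m) (Fin m) ℝ) i j with hgood
  suffices h : ∀ lam : ℝ, t ≤ lam → good lam by exact h
  set K : ℝ := (∑ i : Fin m, ∑ j : Fin m, N i j) + 1 with hKdef
  have hK1 : 1 ≤ K := by
    have : 0 ≤ ∑ i : Fin m, ∑ j : Fin m, N i j :=
      Finset.sum_nonneg fun i _ => Finset.sum_nonneg fun j _ => hN i j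
    simp [hKdef]; linarith
  have hK0 : 0 < K := by linarith
  have hNK : ∀ i j, N i j ≤ K := by
    intro i j
    have h1 : N i j ≤ ∑ j : Fin m, N i j :=
      Finset.single_le_sum (f := fun j => N i j) (fun j _ => hN i j) (Finset.mem_univ j)
    have h2 : (∑ j : Fin m, N i j) ≤ ∑ i : Fin m, ∑ j : Fin m, N i j :=
      Finset.single_le_sum (f := fun i => ∑ j : Fin m, N i j)
        (fun i _ => Finset.sum_nonneg fun j _ => hN i j) (Finset.mem_univ i)
    simp [hKdef]; linarith
  -- claim (a): for large lam, good
  have claim_a : ∀ lam : ℝ, t ≤ lam → (m : ℝ) * K < lam → good lam := by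
    intro lam ht hlam
    have hlam0 : 0 < lam := lt_of_le_of_lt (by positivity) hlam
    have hu : IsUnit ((lam • 1 : Matrix (Fin m) (Fin m) ℝ) - N).det :=
      isUnit_iff_ne_zero.mpr (hdet lam ht)
    set R : Matrix (Fin m) (Fin m) ℝ := (lam • 1 - N)⁻¹ with hRdef
    have hmul : ((lam • 1 : Matrix (Fin m) (Fin m) ℝ) - N) * R = 1 :=
      mul_nonsing_inv _ hu
    have hrec : R = lam⁻¹ • (1 : Matrix (Fin m) (Fin m) ℝ) + (lam⁻¹ • N) * R := by
      have h1 : lam • R - N * R = 1 := by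
        rw [← hmul, Matrix.sub_mul, Matrix.smul_mul, Matrix.one_mul]
      have h2 : lam • R = 1 + N * R := by
        rw [← h1]; abel
      calc R = lam⁻¹ • (lam • R) := by rw [smul_smul, inv_mul_cancel₀ (ne_of_gt hlam0), one_smul]
        _ = lam⁻¹ • ((1 : Matrix (Fin m) (Fin m) ℝ) + N * R) := by rw [h2]
        _ = lam⁻¹ • (1 : Matrix (Fin m) (Fin m) ℝ) + (lam⁻¹ • N) * R := by
            rw [smul_add, Matrix.smul_mul]
    refine nonneg_of_left_rec (K := K / lam) (by positivity) ?_ ?_ ?_ ?_ hrec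
    · intro i j
      rw [Matrix.smul_apply]
      by_cases h : i = j <;> simp [Matrix.one_apply, h] <;> positivity
    · intro i j
      rw [Matrix.smul_apply]
      exact mul_nonneg (by positivity) (hN i j)
    · intro i j
      rw [Matrix.smul_apply, smul_eq_mul]
      rw [div_eq_inv_mul]
      exact mul_le_mul_of_nonneg_left (hNK i j) (by positivity)
    · rw [mul_div_assoc']
      exact (div_lt_one hlam0).mpr hlam
  -- claim (b): stepping down
  have claim_b : ∀ nu lam : ℝ, t ≤ lam → lam < nu → good nu →
      (nu - lam) * ((m : ℝ) * ((∑ i : Fin m, ∑ j : Fin m,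
        ((nu • 1 - N)⁻¹ : Matrix (Fin m) (Fin m) ℝ) i j) + 1)) < 1 → good lam := by
    intro nu lam htlam hlt hgnu hsmall
    have htnu : t ≤ nu := le_trans htlam (le_of_lt hlt)
    have hu : IsUnit ((lam • 1 : Matrix (Fin m) (Fin m) ℝ) - N).det :=
      isUnit_iff_ne_zero.mpr (hdet lam htlam)
    have hv : IsUnit ((nu • 1 : Matrix (Fin m) (Fin m) ℝ) - N).det :=
      isUnit_iff_ne_zero.mpr (hdet nu htnu)
    set U : Matrix (Fin m) (Fin m) ℝ := lam • 1 - N with hU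
    set V : Matrix (Fin m) (Fin m) ℝ := nu • 1 - N with hV
    set E : ℝ := (∑ i : Fin m, ∑ j : Fin m, (V⁻¹) i j) + 1 with hEdef
    have hE1 : 1 ≤ E := by
      have : 0 ≤ ∑ i : Fin m, ∑ j : Fin m, (V⁻¹) i j :=
        Finset.sum_nonneg fun i _ => Finset.sum_nonneg fun j _ => hgnu i j
      simp [hEdef]; linarith
    have hVb : ∀ i j, (V⁻¹) i j ≤ E := by
      intro i j
      have h1 : (V⁻¹) i j ≤ ∑ j : Fin m, (V⁻¹) i j :=
        Finset.single_le_sum (f := fun j => (V⁻¹) i j) (fun j _ => hgnu i j)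
          (Finset.mem_univ j)
      have h2 : (∑ j : Fin m, (V⁻¹) i j) ≤ ∑ i : Fin m, ∑ j : Fin m, (V⁻¹) i j :=
        Finset.single_le_sum (f := fun i => ∑ j : Fin m, (V⁻¹) i j)
          (fun i _ => Finset.sum_nonneg fun j _ => hgnu i j) (Finset.mem_univ i)
      simp [hEdef]; linarith
    set eps : ℝ := nu - lam with heps
    have heps0 : 0 < eps := by simp [heps]; linarith
    have hVU : V - U = eps • (1 : Matrix (Fin m) (Fin m) ℝ) := by
      rw [hU, hV, heps, sub_sub_sub_cancel_right, ← sub_smul]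
    have hres : U⁻¹ = V⁻¹ + U⁻¹ * (eps • V⁻¹) := by
      have h1 : U⁻¹ * V * V⁻¹ = U⁻¹ := by
        rw [Matrix.mul_assoc, mul_nonsing_inv _ hv, Matrix.mul_one]
      have h2 : U⁻¹ * U * V⁻¹ = V⁻¹ := by
        rw [nonsing_inv_mul _ hu, Matrix.one_mul]
      have h3 : U⁻¹ * (V - U) * V⁻¹ = U⁻¹ - V⁻¹ := by
        rw [Matrix.mul_sub, Matrix.sub_mul, h1, h2]
      rw [hVU] at h3
      have h4 : U⁻¹ * (eps • (1 : Matrix (Fin m) (Fin m) ℝ)) * V⁻¹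
          = U⁻¹ * (eps • V⁻¹) := by
        rw [Matrix.mul_smul, Matrix.mul_one, Matrix.mul_smul, Matrix.smul_mul]
      rw [h4] at h3
      rw [h3]; abel
    refine nonneg_of_right_rec (K := eps * E) (by positivity) hgnu ?_ ?_ ?_ hres
    · intro i j
      rw [Matrix.smul_apply, smul_eq_mul]
      exact mul_nonneg (le_of_lt heps0) (hgnu i j)
    · intro i j
      rw [Matrix.smul_apply, smul_eq_mul]
      exact mul_le_mul_of_nonneg_left (hVb i j) (le_of_lt heps0)
    · calc (m : ℝ) * (eps * E) = eps * ((m : ℝ) * E) := by ring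
        _ < 1 := by
            rw [heps, hEdef, hV] at *
            exact hsmall
  -- the set of uniformly good lambdas
  set T : Set ℝ := {lam : ℝ | t ≤ lam ∧ ∀ mu : ℝ, lam ≤ mu → good mu} with hT
  have hTne : T.Nonempty := by
    refine ⟨max t ((m : ℝ) * K + 1), le_max_left _ _, fun mu hmu => ?_⟩
    have h1 : t ≤ mu := le_trans (le_max_left _ _) hmu
    have h2 : (m : ℝ) * K < mu :=
      lt_of_lt_of_le (lt_of_lt_of_le (by linarith) (le_max_right t _)) hmu
    exact claim_a mu h1 h2
  have hTbdd : BddBelow T := ⟨t, fun x hx => hx.1⟩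
  set c : ℝ := sInf T with hc
  have hct : t ≤ c := le_csInf hTne fun x hx => hx.1
  have hgt : ∀ mu : ℝ, c < mu → good mu := by
    intro mu hmu
    obtain ⟨x, hxT, hxlt⟩ := (csInf_lt_iff hTbdd hTne).mp hmu
    exact hxT.2 mu (le_of_lt hxlt)
  -- continuity
  have hgc : good c := by
    intro i j
    have hMc : Continuous fun lam : ℝ => (lam • 1 - N : Matrix (Fin m) (Fin m) ℝ) :=
      (continuous_id.smul continuous_const).sub continuous_const
    have hdetc : Continuous fun lam : ℝ => ((lam • 1 - N : Matrix (Fin m) (Fin m) ℝ)).det :=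
      hMc.matrix_det
    have hadjc : Continuous fun lam : ℝ =>
        ((lam • 1 - N : Matrix (Fin m) (Fin m) ℝ)).adjugate i j :=
      hMc.matrix_adjugate.matrix_elem i j
    have hfc : ContinuousAt (fun lam : ℝ =>
        (((lam • 1 - N : Matrix (Fin m) (Fin m) ℝ)).det)⁻¹ *
        ((lam • 1 - N : Matrix (Fin m) (Fin m) ℝ)).adjugate i j) c :=
      (hdetc.continuousAt.inv₀ (hdet c hct)).mul hadjc.continuousAt
    have hfe : ∀ lam : ℝ, ((lam • 1 - N : Matrix (Fin m) (Fin m) ℝ))⁻¹ i j =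
        (((lam • 1 - N : Matrix (Fin m) (Fin m) ℝ)).det)⁻¹ *
        ((lam • 1 - N : Matrix (Fin m) (Fin m) ℝ)).adjugate i j := by
      intro lam
      rw [Matrix.inv_def, Ring.inverse_eq_inv, Matrix.smul_apply, smul_eq_mul]
    show 0 ≤ ((c • 1 - N : Matrix (Fin m) (Fin m) ℝ))⁻¹ i j
    rw [hfe c]
    have htd : Filter.Tendsto (fun lam : ℝ =>
        (((lam • 1 - N : Matrix (Fin m) (Fin m) ℝ)).det)⁻¹ *
        ((lam • 1 - N : Matrix (Fin m) (Fin m) ℝ)).adjugate i j)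
        (nhdsWithin c (Set.Ioi c))
        (nhds ((((c • 1 - N : Matrix (Fin m) (Fin m) ℝ)).det)⁻¹ *
        ((c • 1 - N : Matrix (Fin m) (Fin m) ℝ)).adjugate i j)) :=
      hfc.continuousWithinAt
    refine ge_of_tendsto htd ?_
    refine eventually_mem_nhdsWithin.mono fun mu hmu => ?_
    rw [← hfe mu]
    exact hgt mu hmu i j
  -- conclude c = t
  have hcle : c ≤ t := by
    by_contra hcon
    push_neg at hcon
    set E : ℝ := (∑ i : Fin m, ∑ j : Fin m,
      ((c • 1 - N)⁻¹ : Matrix (Fin m) (Fin m) ℝ) i j) + 1 with hEdef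
    have hEsum : 0 ≤ ∑ i : Fin m, ∑ j : Fin m,
        ((c • 1 - N)⁻¹ : Matrix (Fin m) (Fin m) ℝ) i j :=
      Finset.sum_nonneg fun i _ => Finset.sum_nonneg fun j _ => hgc i j
    have hmE : 0 ≤ (m : ℝ) * E := by
      apply mul_nonneg (Nat.cast_nonneg m)
      rw [hEdef]; linarith
    have hE0 : 0 < (m : ℝ) * E + 1 := by linarith
    set del : ℝ := min (1 / ((m : ℝ) * E + 1)) (c - t) with hdel
    have hdel0 : 0 < del := lt_min (by positivity) (by linarith)
    have hdelE : del * ((m : ℝ) * E) < 1 := by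
      have h1 : del ≤ 1 / ((m : ℝ) * E + 1) := min_le_left _ _
      calc del * ((m : ℝ) * E) ≤ (1 / ((m : ℝ) * E + 1)) * ((m : ℝ) * E) :=
            mul_le_mul_of_nonneg_right h1 hmE
        _ < 1 := by rw [div_mul_eq_mul_div, div_lt_one (by linarith)]; linarith
    have hmem : c - del ∈ T := by
      constructor
      · have : del ≤ c - t := min_le_right _ _
        linarith
      · intro mu hmu
        rcases lt_or_ge mu c with hmc | hcm
        · refine claim_b c mu ?_ hmc hgc ?_
          · have : del ≤ c - t := min_le_right _ _
            linarith
          · have h1 : c - mu ≤ del := by linarith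
            calc (c - mu) * ((m : ℝ) * ((∑ i : Fin m, ∑ j : Fin m,
                  ((c • 1 - N)⁻¹ : Matrix (Fin m) (Fin m) ℝ) i j) + 1))
                = (c - mu) * ((m : ℝ) * E) := by rw [hEdef]
              _ ≤ del * ((m : ℝ) * E) := mul_le_mul_of_nonneg_right h1 hmE
              _ < 1 := hdelE
        · rcases eq_or_lt_of_le hcm with heq | hlt
          · rw [← heq]; exact hgc
          · exact hgt mu hlt
    have : c ≤ c - del := csInf_le hTbdd hmem
    linarith
  intro lam htlam
  rcases eq_or_lt_of_le (le_trans hcle htlam : c ≤ lam) with heq | hlt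
  · rw [← heq]; exact hgc
  · exact hgt lam hlt

private lemma shift_nonneg {m : ℕ} (M : Matrix (Fin m) (Fin m) ℝ)
    (hM : ∀ i j, i ≠ j → 0 ≤ M i j) :
    ∃ s : ℝ, 0 ≤ s ∧ ∀ i j, 0 ≤ (M + s • 1) i j := by
  refine ⟨∑ i, |M i i|, Finset.sum_nonneg fun i _ => abs_nonneg _, ?_⟩
  intro i j
  rw [Matrix.add_apply, Matrix.smul_apply, Matrix.one_apply]
  by_cases h : i = j
  · subst h
    rw [if_pos rfl, smul_eq_mul, mul_one]
    have h1 : |M i i| ≤ ∑ k, |M k k| :=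
      Finset.single_le_sum (f := fun k => |M k k|) (fun k _ => abs_nonneg _)
        (Finset.mem_univ i)
    have h2 : -(M i i) ≤ |M i i| := neg_le_abs _
    linarith
  · rw [if_neg h, smul_eq_mul, mul_zero, add_zero]
    exact hM i j h

private lemma det_shift_ne {m : ℕ} (M : Matrix (Fin m) (Fin m) ℝ) (s t : ℝ)
    (hdet : ∀ lam : ℝ, t ≤ lam → (M - lam • 1).det ≠ 0) :
    ∀ lam : ℝ, t + s ≤ lam →
      ((lam • 1 : Matrix (Fin m) (Fin m) ℝ) - (M + s • 1)).det ≠ 0 := by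
  intro lam hlam
  have he : (lam • 1 : Matrix (Fin m) (Fin m) ℝ) - (M + s • 1)
      = -(M - (lam - s) • 1) := by
    rw [sub_smul]; abel
  rw [he, Matrix.det_neg]
  have h := hdet (lam - s) (by linarith)
  simp [h]

private lemma no_subinvariant {m : ℕ} (M : Matrix (Fin m) (Fin m) ℝ)
    (hM : ∀ i j, i ≠ j → 0 ≤ M i j) (t : ℝ) (y : Fin m → ℝ)
    (hy0 : ∀ i, 0 ≤ y i) (hyne : y ≠ 0)
    (hsub : ∀ i, t * y i ≤ (M.mulVec y) i)
    (hdet : ∀ lam : ℝ, t ≤ lam → (M - lam • 1).det ≠ 0) : False := by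
  obtain ⟨s, hs0, hN⟩ := shift_nonneg M hM
  set N : Matrix (Fin m) (Fin m) ℝ := M + s • 1 with hNdef
  have hdet' := det_shift_ne M s t hdet
  have key := resolvent_nonneg N hN (t + s) hdet' (t + s) le_rfl
  set W : Matrix (Fin m) (Fin m) ℝ := ((t + s) • 1 : Matrix (Fin m) (Fin m) ℝ) - N with hW
  have hu : IsUnit W.det := isUnit_iff_ne_zero.mpr (hdet' (t + s) le_rfl)
  have hRmul : W⁻¹ * W = 1 := nonsing_inv_mul _ hu
  set v : Fin m → ℝ := W.mulVec y with hv
  have hvle : ∀ i, v i ≤ 0 := by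
    intro i
    have : v i = (t + s) * y i - ((M.mulVec y) i + s * y i) := by
      rw [hv, hW, hNdef, Matrix.sub_mulVec, Matrix.add_mulVec,
        Matrix.smul_mulVec, Matrix.one_mulVec, Matrix.smul_mulVec,
        Matrix.one_mulVec]
      simp [Pi.sub_apply, Pi.add_apply, Pi.smul_apply, smul_eq_mul]
    rw [this]
    have := hsub i
    linarith
  have hyv : y = W⁻¹.mulVec v := by
    rw [hv, Matrix.mulVec_mulVec, hRmul, Matrix.one_mulVec]
  have hyle : ∀ i, y i ≤ 0 := by
    intro i
    rw [hyv, Matrix.mulVec]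
    apply Finset.sum_nonpos
    intro j _
    exact mul_nonpos_of_nonneg_of_nonpos (key i j) (hvle j)
  exact hyne (funext fun i => le_antisymm (hyle i) (hy0 i))

private lemma abs_subinvariant {m : ℕ} (M : Matrix (Fin m) (Fin m) ℝ)
    (hM : ∀ i j, i ≠ j → 0 ≤ M i j) (mu : ℂ)
    (hmu : mu ∈ spectrum ℂ (M.map (fun x => (x : ℂ)))) :
    ∃ y : Fin m → ℝ, (∀ i, 0 ≤ y i) ∧ y ≠ 0 ∧ ∀ i, mu.re * y i ≤ (M.mulVec y) i := by
  rw [spectrum.mem_iff] at hmu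
  have hdet0 : ((algebraMap ℂ (Matrix (Fin m) (Fin m) ℂ)) mu
      - M.map (fun x => (x : ℂ))).det = 0 := by
    by_contra h
    exact hmu ((Matrix.isUnit_iff_isUnit_det _).mpr (isUnit_iff_ne_zero.mpr h))
  obtain ⟨v, hvne, hv⟩ := Matrix.exists_mulVec_eq_zero_iff.mpr hdet0
  have hMv : ∀ i, (M.map (fun x => (x : ℂ))).mulVec v i = mu * v i := by
    intro i
    have h1 := congrFun hv i
    rw [Algebra.algebraMap_eq_smul_one, Matrix.sub_mulVec, Matrix.smul_mulVec,
      Matrix.one_mulVec] at h1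
    have h2 : (mu • v) i - (M.map (fun x => (x : ℂ))).mulVec v i = 0 := h1
    rw [Pi.smul_apply, smul_eq_mul] at h2
    exact (sub_eq_zero.mp h2).symm
  obtain ⟨s, hs0, hNs⟩ := shift_nonneg M hM
  set P : Matrix (Fin m) (Fin m) ℝ := M + s • 1 with hPdef
  set y : Fin m → ℝ := fun i => ‖v i‖ with hy
  have hy0 : ∀ i, 0 ≤ y i := fun i => norm_nonneg _
  have hyne : y ≠ 0 := by
    intro h
    apply hvne
    funext i
    have h2 := congrFun h i
    simp only [hy, Pi.zero_apply] at h2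
    exact norm_eq_zero.mp h2
  refine ⟨y, hy0, hyne, ?_⟩
  intro i
  have hPmap : P.map (fun x : ℝ => (x : ℂ)) = M.map (fun x : ℝ => (x : ℂ))
      + (s : ℂ) • (1 : Matrix (Fin m) (Fin m) ℂ) := by
    ext i j
    simp only [Matrix.map_apply, hPdef, Matrix.add_apply, Matrix.smul_apply,
      Matrix.one_apply, smul_eq_mul]
    push_cast [apply_ite]
    split <;> simp
  have hline : ((P.map (fun x : ℝ => (x : ℂ))).mulVec v) i = (mu + s) * v i := by
    rw [hPmap, Matrix.add_mulVec, Matrix.smul_mulVec, Matrix.one_mulVec]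
    rw [Pi.add_apply, hMv i, Pi.smul_apply, smul_eq_mul]
    ring
  have hexp : ((P.map (fun x : ℝ => (x : ℂ))).mulVec v) i
      = ∑ j, ((P i j : ℝ) : ℂ) * v j := by
    simp [Matrix.mulVec, dotProduct, Matrix.map_apply]
  have habs : ‖mu + s‖ * y i ≤ (P.mulVec y) i := by
    calc ‖mu + s‖ * y i = ‖(mu + s) * v i‖ := by
          rw [norm_mul]
      _ = ‖∑ j, ((P i j : ℝ) : ℂ) * v j‖ := by rw [← hline, hexp]
      _ ≤ ∑ j, ‖((P i j : ℝ) : ℂ) * v j‖ := norm_sum_le _ _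
      _ = ∑ j, P i j * y j := by
          apply Finset.sum_congr rfl
          intro j _
          rw [norm_mul, Complex.norm_real, Real.norm_of_nonneg (hNs i j)]
      _ = (P.mulVec y) i := by simp [Matrix.mulVec, dotProduct]
  have hre : mu.re + s ≤ ‖mu + s‖ := by
    have := Complex.re_le_norm (mu + s)
    simpa using this
  have hPy : (P.mulVec y) i = (M.mulVec y) i + s * y i := by
    rw [hPdef, Matrix.add_mulVec, Matrix.smul_mulVec, Matrix.one_mulVec]
    simp [smul_eq_mul]
  have h1 : (mu.re + s) * y i ≤ ‖mu + s‖ * y i :=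
    mul_le_mul_of_nonneg_right hre (hy0 i)
  rw [hPy] at habs
  nlinarith [hy0 i]


private lemma real_det_spectrum {m : ℕ} (M : Matrix (Fin m) (Fin m) ℝ) (lam : ℝ)
    (h : (M - lam • 1).det = 0) :
    (lam : ℂ) ∈ spectrum ℂ (M.map (fun x => (x : ℂ))) := by
  rw [spectrum.mem_iff]
  intro hunit
  rw [Matrix.isUnit_iff_isUnit_det, isUnit_iff_ne_zero] at hunit
  apply hunit
  have hmap : (algebraMap ℂ (Matrix (Fin m) (Fin m) ℂ)) (lam : ℂ)
      - M.map (fun x => (x : ℂ))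
      = -(((M - lam • 1).map (fun x => (x : ℂ)))) := by
    rw [Algebra.algebraMap_eq_smul_one]
    ext i j
    simp only [Matrix.sub_apply, Matrix.neg_apply, Matrix.map_apply, Matrix.smul_apply,
      Matrix.one_apply, smul_eq_mul]
    push_cast [apply_ite]
    split <;> simp <;> ring
  rw [hmap, Matrix.det_neg]
  have hdet : ((M - lam • 1).map (fun x => (x : ℂ))).det = 0 := by
    have := RingHom.map_det (algebraMap ℝ ℂ) (M - lam • 1)
    rw [h] at this
    have he : (algebraMap ℝ ℂ).mapMatrix (M - lam • 1)
        = (M - lam • 1).map (fun x => (x : ℂ)) := rfl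
    rw [← he, ← this]
    simp
  rw [hdet, mul_zero]

private lemma metzler_hurwitz_iff_det {m : ℕ} (M : Matrix (Fin m) (Fin m) ℝ)
    (hM : ∀ i j, i ≠ j → 0 ≤ M i j) :
    (∀ mu ∈ spectrum ℂ (M.map (fun x => (x : ℂ))), mu.re < 0)
      ↔ ∀ lam : ℝ, 0 ≤ lam → (M - lam • 1).det ≠ 0 := by
  constructor
  · intro hH lam hlam hdet
    have := hH (lam : ℂ) (real_det_spectrum M lam hdet)
    rw [Complex.ofReal_re] at this
    linarith
  · intro hdet mu hmu
    by_contra hcon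
    push_neg at hcon
    obtain ⟨y, hy0, hyne, hsub⟩ := abs_subinvariant M hM mu hmu
    exact no_subinvariant M hM mu.re y hy0 hyne hsub
      (fun lam hlam => hdet lam (le_trans hcon hlam))

private lemma det_ne_of_posvec {m : ℕ} (M : Matrix (Fin m) (Fin m) ℝ)
    (hM : ∀ i j, i ≠ j → 0 ≤ M i j)
    (v : Fin m → ℝ) (hv : ∀ i, 0 < v i) (hMv : ∀ i, (M.mulVec v) i < 0) :
    ∀ lam : ℝ, 0 ≤ lam → (M - lam • 1).det ≠ 0 := by
  intro lam hlam hdet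
  have hdetT : (Mᵀ - lam • 1).det = 0 := by
    have : (Mᵀ - lam • 1) = (M - lam • 1)ᵀ := by
      rw [Matrix.transpose_sub, Matrix.transpose_smul, Matrix.transpose_one]
    rw [this, Matrix.det_transpose, hdet]
  have hMT : ∀ i j, i ≠ j → 0 ≤ Mᵀ i j := fun i j hij => hM j i (Ne.symm hij)
  obtain ⟨y, hy0, hyne, hsub⟩ :=
    abs_subinvariant Mᵀ hMT (lam : ℂ) (real_det_spectrum Mᵀ lam hdetT)
  rw [Complex.ofReal_re] at hsub
  -- double counting sum
  obtain ⟨i0, hi0⟩ := Function.ne_iff.mp hyne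
  have hi0pos : 0 < y i0 := lt_of_le_of_ne (hy0 i0) (Ne.symm hi0)
  have hneg : (∑ i, y i * (M.mulVec v) i) < 0 := by
    have hle : ∀ i ∈ Finset.univ, y i * (M.mulVec v) i ≤ (fun _ => (0 : ℝ)) i :=
      fun i _ => mul_nonpos_of_nonneg_of_nonpos (hy0 i) (le_of_lt (hMv i))
    have hstrict : ∃ i ∈ Finset.univ, y i * (M.mulVec v) i < (fun _ => (0 : ℝ)) i :=
      ⟨i0, Finset.mem_univ i0, mul_neg_of_pos_of_neg hi0pos (hMv i0)⟩
    calc (∑ i, y i * (M.mulVec v) i) < ∑ _i : Fin m, (0 : ℝ) :=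
          Finset.sum_lt_sum hle hstrict
      _ = 0 := by simp
  have hpos : 0 ≤ ∑ j, (Mᵀ.mulVec y) j * v j :=
    Finset.sum_nonneg fun j _ => mul_nonneg
      (le_trans (mul_nonneg hlam (hy0 j)) (hsub j)) (le_of_lt (hv j))
  have hswap : (∑ j, (Mᵀ.mulVec y) j * v j) = ∑ i, y i * (M.mulVec v) i := by
    simp only [Matrix.mulVec, dotProduct, Matrix.transpose_apply,
      Finset.sum_mul, Finset.mul_sum]
    rw [Finset.sum_comm]
    apply Finset.sum_congr rfl
    intro i _
    apply Finset.sum_congr rfl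
    intro j _
    ring
  rw [hswap] at hpos
  linarith

private lemma exists_posvec {m : ℕ} (M : Matrix (Fin m) (Fin m) ℝ)
    (hM : ∀ i j, i ≠ j → 0 ≤ M i j)
    (hdet : ∀ lam : ℝ, 0 ≤ lam → (M - lam • 1).det ≠ 0) :
    ∃ v : Fin m → ℝ, (∀ i, 0 < v i) ∧ ∀ i, (M.mulVec v) i < 0 := by
  obtain ⟨s, hs0, hN⟩ := shift_nonneg M hM
  set N : Matrix (Fin m) (Fin m) ℝ := M + s • 1 with hNdef
  have hdet' : ∀ lam : ℝ, 0 + s ≤ lam →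
      ((lam • 1 : Matrix (Fin m) (Fin m) ℝ) - N).det ≠ 0 :=
    det_shift_ne M s 0 hdet
  have key := resolvent_nonneg N hN (0 + s) hdet' (0 + s) le_rfl
  have hEq : ((0 + s) • 1 : Matrix (Fin m) (Fin m) ℝ) - N = -M := by
    rw [hNdef, zero_add]; abel
  rw [hEq] at key
  have hu : IsUnit (-M : Matrix (Fin m) (Fin m) ℝ).det := by
    rw [isUnit_iff_ne_zero]
    have h0 := hdet 0 le_rfl
    rw [zero_smul, sub_zero] at h0
    rw [Matrix.det_neg]
    simp [h0]
  set v : Fin m → ℝ := (-M : Matrix (Fin m) (Fin m) ℝ)⁻¹.mulVec (fun _ => 1) with hvdef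
  have hMv : M.mulVec v = fun _ => (-1 : ℝ) := by
    have h1 : (-M : Matrix (Fin m) (Fin m) ℝ) * (-M)⁻¹ = 1 := mul_nonsing_inv _ hu
    have h2 : (M : Matrix (Fin m) (Fin m) ℝ) * (-M)⁻¹ = -1 := by
      have h3 : -((M : Matrix (Fin m) (Fin m) ℝ) * (-M)⁻¹) = 1 := by
        rw [← Matrix.neg_mul]; exact h1
      exact neg_eq_iff_eq_neg.mp h3
    rw [hvdef, Matrix.mulVec_mulVec, h2]
    funext i
    rw [Matrix.neg_mulVec, Pi.neg_apply, Matrix.one_mulVec]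
  refine ⟨v, ?_, ?_⟩
  · intro i
    have hvnn : 0 ≤ v i := by
      rw [hvdef, Matrix.mulVec]
      exact Finset.sum_nonneg fun j _ => by
        have := key i j
        simpa using mul_nonneg this zero_le_one
    rcases lt_or_eq_of_le hvnn with h | h
    · exact h
    have hrow : ∀ j, (-M : Matrix (Fin m) (Fin m) ℝ)⁻¹ i j = 0 := by
      have hsum : (∑ j, (-M : Matrix (Fin m) (Fin m) ℝ)⁻¹ i j) = 0 := by
        have : v i = ∑ j, (-M : Matrix (Fin m) (Fin m) ℝ)⁻¹ i j := by
          rw [hvdef, Matrix.mulVec]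
          simp [dotProduct]
        rw [this] at h
        exact h.symm
      intro j
      have := (Finset.sum_eq_zero_iff_of_nonneg
        (fun j _ => key i j)).mp hsum j (Finset.mem_univ j)
      exact this
    have h1 : (-M : Matrix (Fin m) (Fin m) ℝ)⁻¹ * (-M) = 1 := nonsing_inv_mul _ hu
    have h2 := congrFun (congrFun h1 i) i
    rw [Matrix.mul_apply] at h2
    rw [Finset.sum_eq_zero (fun j _ => by rw [hrow j, zero_mul])] at h2
    rw [Matrix.one_apply_eq] at h2
    norm_num at h2
  · intro i
    rw [hMv]
    norm_num

private lemma schur_det {n : ℕ} (A : Matrix (Fin (n+1)) (Fin (n+1)) ℝ) (lam : ℝ)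
    (hd : A (Fin.last n) (Fin.last n) - lam ≠ 0) :
    (A - lam • 1).det = (A (Fin.last n) (Fin.last n) - lam) *
      ((Matrix.of fun i j : Fin n => A i.castSucc j.castSucc
        - A i.castSucc (Fin.last n) * A (Fin.last n) j.castSucc
          / (A (Fin.last n) (Fin.last n) - lam)) - lam • 1).det := by
  set d : ℝ := A (Fin.last n) (Fin.last n) with hddef
  set A' : Matrix (Fin (n+1)) (Fin (n+1)) ℝ := A - lam • 1 with hA'
  set e : Fin n ⊕ Fin 1 ≃ Fin (n+1) := finSumFinEquiv with he
  have hel : ∀ i : Fin n, e (Sum.inl i) = i.castSucc := by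
    intro i
    apply Fin.ext
    simp [he, finSumFinEquiv]
  have her : ∀ j : Fin 1, e (Sum.inr j) = Fin.last n := by
    intro j
    apply Fin.ext
    have : j = 0 := Subsingleton.elim _ _
    subst this
    simp [he, finSumFinEquiv]
  set B : Matrix (Fin n) (Fin n) ℝ := Matrix.of fun i j => A' i.castSucc j.castSucc with hB
  set Bc : Matrix (Fin n) (Fin 1) ℝ :=
    Matrix.of fun i _ => A i.castSucc (Fin.last n) with hBc
  set Br : Matrix (Fin 1) (Fin n) ℝ :=
    Matrix.of fun _ j => A (Fin.last n) j.castSucc with hBr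
  set Bd : Matrix (Fin 1) (Fin 1) ℝ := Matrix.of fun _ _ => d - lam with hBd
  have hclast : ∀ i : Fin n, i.castSucc ≠ Fin.last n :=
    fun i => Fin.ne_of_lt (Fin.castSucc_lt_last i)
  have hsub : A'.submatrix e e = Matrix.fromBlocks B Bc Br Bd := by
    ext i j
    cases i with
    | inl i =>
      cases j with
      | inl j =>
        rw [Matrix.submatrix_apply, hel, hel]
        rfl
      | inr j =>
        rw [Matrix.submatrix_apply, hel, her]
        have : A' i.castSucc (Fin.last n) = A i.castSucc (Fin.last n) := by
          rw [hA', Matrix.sub_apply, Matrix.smul_apply, Matrix.one_apply_ne (hclast i),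
            smul_eq_mul, mul_zero, sub_zero]
        rw [this]
        rfl
    | inr i =>
      cases j with
      | inl j =>
        rw [Matrix.submatrix_apply, hel, her]
        have : A' (Fin.last n) j.castSucc = A (Fin.last n) j.castSucc := by
          rw [hA', Matrix.sub_apply, Matrix.smul_apply,
            Matrix.one_apply_ne (Ne.symm (hclast j)), smul_eq_mul, mul_zero, sub_zero]
        rw [this]
        rfl
      | inr j =>
        rw [Matrix.submatrix_apply, her, her]
        have : A' (Fin.last n) (Fin.last n) = d - lam := by
          rw [hA', Matrix.sub_apply, Matrix.smul_apply, Matrix.one_apply_eq,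
            smul_eq_mul, mul_one, hddef]
        rw [this]
        rfl
  have hdetBd : Bd.det = d - lam := by
    rw [Matrix.det_fin_one]
    rfl
  have hu : IsUnit Bd.det := by rw [hdetBd]; exact isUnit_iff_ne_zero.mpr hd
  have : Invertible Bd := Bd.invertibleOfIsUnitDet hu
  have hinv : Bd⁻¹ = Matrix.of fun _ _ => (d - lam)⁻¹ := by
    apply Matrix.inv_eq_right_inv
    ext i j
    have hi : i = 0 := Subsingleton.elim _ _
    have hj : j = 0 := Subsingleton.elim _ _
    subst hi; subst hj
    rw [Matrix.mul_apply]
    simp [hBd, Matrix.one_apply, mul_inv_cancel₀ hd]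
  calc (A - lam • 1).det = (A'.submatrix e e).det :=
        (Matrix.det_submatrix_equiv_self e A').symm
    _ = (Matrix.fromBlocks B Bc Br Bd).det := by rw [hsub]
    _ = Bd.det * (B - Bc * ⅟Bd * Br).det := Matrix.det_fromBlocks₂₂ B Bc Br Bd
    _ = (d - lam) * ((Matrix.of fun i j : Fin n => A i.castSucc j.castSucc
        - A i.castSucc (Fin.last n) * A (Fin.last n) j.castSucc / (d - lam))
          - lam • 1).det := by
        rw [hdetBd, invOf_eq_nonsing_inv]
        congr 2
        ext i j
        have hone : (1 : Matrix (Fin (n+1)) (Fin (n+1)) ℝ) i.castSucc j.castSucc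
            = (1 : Matrix (Fin n) (Fin n) ℝ) i j := by
          by_cases h : i = j
          · subst h; rw [Matrix.one_apply_eq, Matrix.one_apply_eq]
          · rw [Matrix.one_apply_ne h, Matrix.one_apply_ne
              (fun hc => h (Fin.castSucc_injective n hc))]
        have hlhs : (B - Bc * Bd⁻¹ * Br) i j
            = A i.castSucc j.castSucc - lam * (1 : Matrix (Fin n) (Fin n) ℝ) i j
              - A i.castSucc (Fin.last n) * (d - lam)⁻¹ * A (Fin.last n) j.castSucc := by
          rw [Matrix.sub_apply, Matrix.mul_apply, Fin.sum_univ_one,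
            Matrix.mul_apply, Fin.sum_univ_one, hinv]
          have hBij : B i j = A i.castSucc j.castSucc
              - lam * (1 : Matrix (Fin n) (Fin n) ℝ) i j := by
            rw [hB, Matrix.of_apply, hA', Matrix.sub_apply, Matrix.smul_apply,
              smul_eq_mul, hone]
          rw [hBij, hBc, hBr]
          simp only [Matrix.of_apply]
        have hrhs : ((Matrix.of fun i j : Fin n => A i.castSucc j.castSucc
            - A i.castSucc (Fin.last n) * A (Fin.last n) j.castSucc / (d - lam))
              - lam • (1 : Matrix (Fin n) (Fin n) ℝ)) i j
            = A i.castSucc j.castSucc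
              - A i.castSucc (Fin.last n) * A (Fin.last n) j.castSucc / (d - lam)
              - lam * (1 : Matrix (Fin n) (Fin n) ℝ) i j := by
          rw [Matrix.sub_apply, Matrix.of_apply, Matrix.smul_apply, smul_eq_mul]
        rw [hlhs, hrhs, div_eq_mul_inv]
        ring


theorem schur_complement_hurwitz_metzler
    (n : ℕ) (hn : 1 ≤ n)
    (A : Matrix (Fin (n + 1)) (Fin (n + 1)) ℝ)
    (hmetz : IsMetzler A)
    (hd : A (Fin.last n) (Fin.last n) < 0)
    (D : Matrix (Fin n) (Fin n) ℝ)
    (hD : ∀ i j : Fin n,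
      D i j = A i.castSucc j.castSucc -
        (A i.castSucc (Fin.last n) * A (Fin.last n) j.castSucc) /
          A (Fin.last n) (Fin.last n)) :
    IsHurwitz A ↔ IsHurwitz D := by
  have hclast : ∀ i : Fin n, i.castSucc ≠ Fin.last n :=
    fun i => Fin.ne_of_lt (Fin.castSucc_lt_last i)
  have ha : ∀ i : Fin n, 0 ≤ A i.castSucc (Fin.last n) :=
    fun i => hmetz _ _ (hclast i)
  have hb : ∀ j : Fin n, 0 ≤ A (Fin.last n) j.castSucc :=
    fun j => hmetz _ _ (Ne.symm (hclast j))
  have hDmetz : IsMetzler D := by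
    intro i j hij
    rw [hD]
    have h1 : 0 ≤ A i.castSucc j.castSucc :=
      hmetz _ _ (fun hc => hij (Fin.castSucc_injective n hc))
    have h2 : A i.castSucc (Fin.last n) * A (Fin.last n) j.castSucc /
        A (Fin.last n) (Fin.last n) ≤ 0 :=
      div_nonpos_of_nonneg_of_nonpos (mul_nonneg (ha i) (hb j)) (le_of_lt hd)
    linarith
  have hAiff := metzler_hurwitz_iff_det A hmetz
  have hDiff := metzler_hurwitz_iff_det D hDmetz
  constructor
  · -- A Hurwitz → D Hurwitz
    intro hA
    have hAdet : ∀ lam : ℝ, 0 ≤ lam → (A - lam • 1).det ≠ 0 := hAiff.mp hA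
    obtain ⟨v, hv, hAv⟩ := exists_posvec A hmetz hAdet
    set v' : Fin n → ℝ := fun i => v i.castSucc with hv'
    have hsplit : ∀ i : Fin (n+1), (A.mulVec v) i
        = (∑ j : Fin n, A i j.castSucc * v' j) + A i (Fin.last n) * v (Fin.last n) := by
      intro i
      rw [Matrix.mulVec, dotProduct, Fin.sum_univ_castSucc]
    have hlastineq : (∑ j : Fin n, A (Fin.last n) j.castSucc * v' j)
        + A (Fin.last n) (Fin.last n) * v (Fin.last n) < 0 := by
      rw [← hsplit (Fin.last n)]
      exact hAv (Fin.last n)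
    have hDv : ∀ i, (D.mulVec v') i < 0 := by
      intro i
      set S : ℝ := ∑ j : Fin n, A (Fin.last n) j.castSucc * v' j with hS
      have hexp : (D.mulVec v') i = (∑ j : Fin n, A i.castSucc j.castSucc * v' j)
          - A i.castSucc (Fin.last n) / A (Fin.last n) (Fin.last n) * S := by
        rw [Matrix.mulVec, dotProduct]
        rw [hS, Finset.mul_sum, ← Finset.sum_sub_distrib]
        apply Finset.sum_congr rfl
        intro j _
        rw [hD]
        ring
      have hfrac : 0 ≤ -(A i.castSucc (Fin.last n) / A (Fin.last n) (Fin.last n)) := by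
        rw [neg_nonneg]
        exact div_nonpos_of_nonneg_of_nonpos (ha i) (le_of_lt hd)
      have hmul := mul_le_mul_of_nonneg_left
        (le_of_lt (show S < -(A (Fin.last n) (Fin.last n) * v (Fin.last n)) by linarith))
        hfrac
      have hsimp : -(A i.castSucc (Fin.last n) / A (Fin.last n) (Fin.last n))
          * -(A (Fin.last n) (Fin.last n) * v (Fin.last n))
          = A i.castSucc (Fin.last n) * v (Fin.last n) := by
        have hdne : A (Fin.last n) (Fin.last n) ≠ 0 := ne_of_lt hd
        field_simp
      rw [hsimp] at hmul
      have hAvi := hAv i.castSucc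
      rw [hsplit i.castSucc] at hAvi
      rw [hexp]
      nlinarith [hmul, hAvi]
    exact hDiff.mpr (det_ne_of_posvec D hDmetz v' (fun i => hv i.castSucc) hDv)
  · -- D Hurwitz → A Hurwitz
    intro hDh
    have hDdetAll : ∀ lam : ℝ, 0 ≤ lam → (D - lam • 1).det ≠ 0 := hDiff.mp hDh
    apply hAiff.mpr
    intro lam hlam hdetA
    have hdl : A (Fin.last n) (Fin.last n) - lam ≠ 0 := by linarith
    have hdlneg : A (Fin.last n) (Fin.last n) - lam < 0 := by linarith
    rw [schur_det A lam hdl] at hdetA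
    set Mlam : Matrix (Fin n) (Fin n) ℝ := Matrix.of fun i j : Fin n =>
      A i.castSucc j.castSucc - A i.castSucc (Fin.last n) * A (Fin.last n) j.castSucc
        / (A (Fin.last n) (Fin.last n) - lam) with hMlam
    have hdet0 : (Mlam - lam • 1).det = 0 := by
      rcases mul_eq_zero.mp hdetA with h | h
      · exact absurd h hdl
      · exact h
    have hMmetz : ∀ i j, i ≠ j → 0 ≤ Mlam i j := by
      intro i j hij
      rw [hMlam]
      have h1 : 0 ≤ A i.castSucc j.castSucc :=
        hmetz _ _ (fun hc => hij (Fin.castSucc_injective n hc))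
      have h2 : A i.castSucc (Fin.last n) * A (Fin.last n) j.castSucc
          / (A (Fin.last n) (Fin.last n) - lam) ≤ 0 :=
        div_nonpos_of_nonneg_of_nonpos (mul_nonneg (ha i) (hb j)) (le_of_lt hdlneg)
      show 0 ≤ A i.castSucc j.castSucc - A i.castSucc (Fin.last n)
        * A (Fin.last n) j.castSucc / (A (Fin.last n) (Fin.last n) - lam)
      linarith
    obtain ⟨y, hy0, hyne, hsub⟩ :=
      abs_subinvariant Mlam hMmetz (lam : ℂ) (real_det_spectrum Mlam lam hdet0)
    rw [Complex.ofReal_re] at hsub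
    have hDM : ∀ i j, Mlam i j ≤ D i j := by
      intro i j
      have hkey : D i j - Mlam i j
          = A i.castSucc (Fin.last n) * A (Fin.last n) j.castSucc * lam
            / ((A (Fin.last n) (Fin.last n) - lam) * A (Fin.last n) (Fin.last n)) := by
        rw [hD, hMlam]
        show A i.castSucc j.castSucc - _ - (A i.castSucc j.castSucc - _) = _
        have hdne : A (Fin.last n) (Fin.last n) ≠ 0 := ne_of_lt hd
        field_simp [hdne, hdl]
        ring
      have hpos : 0 ≤ A i.castSucc (Fin.last n) * A (Fin.last n) j.castSucc * lam
          / ((A (Fin.last n) (Fin.last n) - lam) * A (Fin.last n) (Fin.last n)) := by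
        apply div_nonneg
        · exact mul_nonneg (mul_nonneg (ha i) (hb j)) hlam
        · exact le_of_lt (mul_pos_of_neg_of_neg hdlneg hd)
      linarith [hkey, hpos]
    have hDsub : ∀ i, lam * y i ≤ (D.mulVec y) i := by
      intro i
      calc lam * y i ≤ (Mlam.mulVec y) i := hsub i
        _ ≤ (D.mulVec y) i := by
            rw [Matrix.mulVec, Matrix.mulVec, dotProduct, dotProduct]
            exact Finset.sum_le_sum fun j _ =>
              mul_le_mul_of_nonneg_right (hDM i j) (hy0 j)
    exact no_subinvariant D hDmetz lam y hy0 hyne hDsub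
      (fun mu hmu => hDdetAll mu (le_trans hlam hmu))
end

section
/- Let n ≥ 1, let B be a real symmetric Hurwitz n×n matrix, and let k₁, …, kₙ, kₙ₊₁ ∈ ℝ. Define the (n+1)×(n+1) matrix A by: A i j = B i j − (kᵢ₊₁ * kⱼ₊₁)/exp(kₙ₊₁) for i, j < n (indices written 1-based), A i n = A n i = kᵢ₊₁ for i < n, and A n n = −exp(kₙ₊₁). Then A is a symmetric Hurwitz matrix. -/
open Matrix

/-!
The complexification of a real symmetric matrix is Hermitian, so its spectrum is real and
coincides with the real spectrum; hence a real symmetric matrix is Hurwitz iff it is negative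
definite. Writing a vector as `(y, z)` and `e = exp kₙ₊₁`, completing the square gives
`xᵀ A x = yᵀ B y - (k ⬝ y - e z)² / e`, which is negative for `x ≠ 0` when `B` is negative
definite.
-/

open scoped ComplexOrder

namespace Matrix

lemma IsHermitian.posDef_neg_iff_eigenvalues_neg {𝕜 ι : Type*} [RCLike 𝕜] [Fintype ι]
    [DecidableEq ι] {A : Matrix ι ι 𝕜} (hA : A.IsHermitian) :
    (-A).PosDef ↔ ∀ i, hA.eigenvalues i < 0 := by
  conv_lhs => rw [hA.spectral_theorem, ← map_neg]
  simp [Unitary.isUnit_coe.posDef_star_right_conjugate_iff]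

lemma map_mem_spectrum_map_iff {K L ι : Type*} [Field K] [Field L] [Fintype ι] [DecidableEq ι]
    (f : K →+* L) (M : Matrix ι ι K) (μ : K) :
    f μ ∈ spectrum L (M.map f) ↔ μ ∈ spectrum K M := by
  rw [mem_spectrum_iff_isRoot_charpoly, mem_spectrum_iff_isRoot_charpoly, charpoly_map,
    Polynomial.isRoot_map_iff f.injective]

lemma IsSymm.of_castSucc_last {α : Type*} {n : ℕ} {A : Matrix (Fin (n + 1)) (Fin (n + 1)) α}
    (h₁ : ∀ i j : Fin n, A i.castSucc j.castSucc = A j.castSucc i.castSucc)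
    (h₂ : ∀ i : Fin n, A i.castSucc (Fin.last n) = A (Fin.last n) i.castSucc) : A.IsSymm := by
  refine IsSymm.ext fun i j => ?_
  induction i using Fin.lastCases <;> induction j using Fin.lastCases <;> simp [h₁, h₂]

lemma snoc_dotProduct_mulVec_snoc {R : Type*} [CommSemiring R] {n : ℕ}
    (A : Matrix (Fin (n + 1)) (Fin (n + 1)) R) (y : Fin n → R) (z : R) :
    (Fin.snoc y z : Fin (n + 1) → R) ⬝ᵥ (A *ᵥ Fin.snoc y z) =
      y ⬝ᵥ (A.submatrix Fin.castSucc Fin.castSucc *ᵥ y)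
        + (y ⬝ᵥ fun i => A i.castSucc (Fin.last n)) * z
        + z * ((fun j => A (Fin.last n) j.castSucc) ⬝ᵥ y)
        + z * A (Fin.last n) (Fin.last n) * z := by
  simp [dotProduct, mulVec, Fin.sum_univ_castSucc, Finset.mul_sum, Finset.sum_mul, mul_add,
    Finset.sum_add_distrib, mul_assoc]
  ring

lemma snoc_dotProduct_mulVec_snoc_of_bordered {K : Type*} [Field K] {n : ℕ}
    {B : Matrix (Fin n) (Fin n) K} {v : Fin n → K} {e : K} (he : e ≠ 0)
    {A : Matrix (Fin (n + 1)) (Fin (n + 1)) K}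
    (h₁ : ∀ i j : Fin n, A i.castSucc j.castSucc = B i j - v i * v j / e)
    (h₂ : ∀ i : Fin n, A i.castSucc (Fin.last n) = v i)
    (h₃ : ∀ i : Fin n, A (Fin.last n) i.castSucc = v i)
    (h₄ : A (Fin.last n) (Fin.last n) = -e) (y : Fin n → K) (z : K) :
    (Fin.snoc y z : Fin (n + 1) → K) ⬝ᵥ (A *ᵥ Fin.snoc y z) =
      y ⬝ᵥ (B *ᵥ y) - (v ⬝ᵥ y - e * z) ^ 2 / e := by
  have hsub : A.submatrix Fin.castSucc Fin.castSucc = B - e⁻¹ • vecMulVec v v := by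
    ext i j
    simp [h₁, vecMulVec_apply, div_eq_inv_mul]
  rw [snoc_dotProduct_mulVec_snoc, hsub, funext h₂, funext h₃, h₄, sub_mulVec, dotProduct_sub,
    smul_mulVec, vecMulVec_mulVec, dotProduct_smul, dotProduct_comm y v]
  simp only [op_smul_eq_smul, dotProduct_smul, smul_eq_mul, mul_neg, neg_mul]
  rw [dotProduct_comm y v]
  field_simp
  ring

end Matrix

lemma isHurwitz_iff_forall_mem_spectrum_neg {n : ℕ} {M : Matrix (Fin n) (Fin n) ℝ}
    (hM : M.IsSymm) : IsHurwitz M ↔ ∀ μ ∈ spectrum ℝ M, μ < 0 := by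
  have hMc : (M.map Complex.ofRealHom).IsHermitian :=
    (isHermitian_iff_isSymm.2 hM).map _ fun x => by simp
  refine ⟨fun h μ hμ => ?_, fun h μ hμ => ?_⟩
  · simpa using h _ ((map_mem_spectrum_map_iff Complex.ofRealHom M μ).2 hμ)
  · obtain ⟨_, ⟨i, rfl⟩, rfl⟩ := hMc.spectrum_eq_image_range ▸ hμ
    simpa using h _ ((map_mem_spectrum_map_iff Complex.ofRealHom M _).1 hμ)

lemma isHurwitz_iff_posDef_neg {n : ℕ} {M : Matrix (Fin n) (Fin n) ℝ} (hM : M.IsSymm) :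
    IsHurwitz M ↔ (-M).PosDef := by
  have hM' : M.IsHermitian := isHermitian_iff_isSymm.2 hM
  rw [isHurwitz_iff_forall_mem_spectrum_neg hM, hM'.posDef_neg_iff_eigenvalues_neg,
    hM'.spectrum_real_eq_range_eigenvalues]
  simp

theorem reconstruction_is_symm_hurwitz_general
    (n : ℕ)
    (B : Matrix (Fin n) (Fin n) ℝ)
    (hBsymm : B.IsSymm) (hB : IsHurwitz B)
    (k : Fin (n + 1) → ℝ)
    (A : Matrix (Fin (n + 1)) (Fin (n + 1)) ℝ)
    (hA₁ : ∀ i j : Fin n, A i.castSucc j.castSucc =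
      B i j - (k i.castSucc * k j.castSucc) / Real.exp (k (Fin.last n)))
    (hA₂ : ∀ i : Fin n, A i.castSucc (Fin.last n) = k i.castSucc)
    (hA₃ : ∀ i : Fin n, A (Fin.last n) i.castSucc = k i.castSucc)
    (hA₄ : A (Fin.last n) (Fin.last n) = -Real.exp (k (Fin.last n))) :
    A.IsSymm ∧ IsHurwitz A := by
  have hAsymm : A.IsSymm := IsSymm.of_castSucc_last
    (fun i j => by rw [hA₁, hA₁, hBsymm.apply, mul_comm]) (fun i => by rw [hA₂, hA₃])
  refine ⟨hAsymm, (isHurwitz_iff_posDef_neg hAsymm).2 ?_⟩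
  have hBneg := (isHurwitz_iff_posDef_neg hBsymm).1 hB
  set e := Real.exp (k (Fin.last n))
  have he : 0 < e := Real.exp_pos _
  refine posDef_iff_dotProduct_mulVec.2 ⟨(isHermitian_iff_isSymm.2 hAsymm).neg, fun x hx => ?_⟩
  obtain ⟨y, z, rfl⟩ : ∃ y z, x = Fin.snoc y z := ⟨_, _, (Fin.snoc_init_self x).symm⟩
  rw [star_trivial, neg_mulVec, dotProduct_neg, neg_pos,
    snoc_dotProduct_mulVec_snoc_of_bordered he.ne' hA₁ hA₂ hA₃ hA₄]
  rcases eq_or_ne y 0 with rfl | hy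
  · have hz : z ≠ 0 := by
      rintro rfl
      exact hx (funext fun i => Fin.lastCases (by simp) (by simp) i)
    simp only [mulVec_zero, dotProduct_zero, zero_sub, neg_sq, neg_lt_zero]
    positivity
  · have hBy := hBneg.dotProduct_mulVec_pos hy
    rw [star_trivial, neg_mulVec, dotProduct_neg, neg_pos] at hBy
    have hsq : 0 ≤ ((fun i => k i.castSucc) ⬝ᵥ y - e * z) ^ 2 / e := by positivity
    linarith

theorem reconstruction_is_symm_hurwitz
    (n : ℕ) (hn : 1 ≤ n)
    (B : Matrix (Fin n) (Fin n) ℝ)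
    (hBsymm : B.IsSymm) (hB : IsHurwitz B)
    (k : Fin (n + 1) → ℝ)
    (A : Matrix (Fin (n + 1)) (Fin (n + 1)) ℝ)
    (hA₁ : ∀ i j : Fin n, A i.castSucc j.castSucc =
      B i j - (k i.castSucc * k j.castSucc) / Real.exp (k (Fin.last n)))
    (hA₂ : ∀ i : Fin n, A i.castSucc (Fin.last n) = k i.castSucc)
    (hA₃ : ∀ i : Fin n, A (Fin.last n) i.castSucc = k i.castSucc)
    (hA₄ : A (Fin.last n) (Fin.last n) = -Real.exp (k (Fin.last n))) :
    A.IsSymm ∧ IsHurwitz A :=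
  reconstruction_is_symm_hurwitz_general n B hBsymm hB k A hA₁ hA₂ hA₃ hA₄
end

section
/- Let k₂, k₆, h₂, h₆ ≥ 0 and k₇ ∈ ℝ satisfy 709/500 − h₆·k₂/exp(k₇) ≥ 0 and 53/50 − h₂·k₆/exp(k₇) ≥ 0. Then the 7×7 matrix with rows (−173/100, 173/100, 0, 0, 0, 0, 0), (227/500, −3151/1000 − h₂·k₂/exp(k₇), 0, 909/1000, 727/1000, 53/50 − h₂·k₆/exp(k₇), h₂), (0, 153/200, −153/200, 0, 0, 0, 0), (0, 47/500, 189/500, −789/1000, 0, 0, 0), (0, 1411/1000, 0, 0, −367/200, 0, 0), (0, 709/500 − h₆·k₂/exp(k₇), 0, 0, 0, −23158/13875 − h₆·k₆/exp(k₇), h₆), (0, k₂, 0, 0, 0, k₆, −exp(k₇)) is a Metzler Hurwitz matrix. -/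
/-!
A Metzler matrix `A` admitting a positive vector `d` with `A d < 0` is Hurwitz: Gershgorin's
theorem for the similar matrix `D⁻¹ A D`, `D = diag d`, puts every eigenvalue in a disc around
`A k k` of radius `∑_{j ≠ k} A k j d j / d k`, which lies in `Re z ≤ (A d)_k / d k < 0`.

For the insulin matrix take `d = (6, 5, 6, 4, 4, 5, d₇)` with
`d₇ = 5 (k₂ + k₆) / exp k₇ + 1 / (1 + h₂ + h₆)`: the first term of `d₇` makes rows 2 and 6
independent of `k₂, k₆` and makes row 7 equal to `-exp k₇ / (1 + h₂ + h₆)`, and the second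
one contributes less than `1` to rows 2 and 6, whose constant parts are below `-1`.
-/

open Matrix

section Gershgorin

variable {K n : Type*} [NormedField K] [Fintype n] [DecidableEq n] {A : Matrix n n K}

theorem spectrum_diagonal_inv_mul_mul_diagonal {w : n → K} (hw : ∀ i, w i ≠ 0) :
    spectrum K (diagonal w⁻¹ * A * diagonal w) = spectrum K A := by
  let u : (Matrix n n K)ˣ :=
    ⟨diagonal w, diagonal w⁻¹, by simp [diagonal_mul_diagonal, hw],
      by simp [diagonal_mul_diagonal, hw]⟩
  exact spectrum.units_conjugate' (u := u)

theorem exists_norm_sub_diag_mul_le_of_mem_spectrum {μ : K} (hμ : μ ∈ spectrum K A)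
    {w : n → K} (hw : ∀ i, w i ≠ 0) :
    ∃ k, ‖μ - A k k‖ * ‖w k‖ ≤ ∑ j ∈ Finset.univ.erase k, ‖A k j‖ * ‖w j‖ := by
  rw [← spectrum_diagonal_inv_mul_mul_diagonal hw, ← spectrum_toLin',
    ← Module.End.hasEigenvalue_iff_mem_spectrum] at hμ
  obtain ⟨k, hk⟩ := eigenvalue_mem_ball hμ
  refine ⟨k, ?_⟩
  rw [mem_closedBall_iff_norm'] at hk
  simp only [mul_diagonal, diagonal_mul, Pi.inv_apply, norm_mul, norm_inv] at hk
  rw [show (w k)⁻¹ * A k k * w k = A k k by field_simp [hw k], norm_sub_rev] at hk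
  calc ‖μ - A k k‖ * ‖w k‖
      ≤ (∑ j ∈ Finset.univ.erase k, ‖w k‖⁻¹ * ‖A k j‖ * ‖w j‖) * ‖w k‖ := by gcongr
    _ = ∑ j ∈ Finset.univ.erase k, ‖A k j‖ * ‖w j‖ := by
      rw [Finset.sum_mul]
      refine Finset.sum_congr rfl fun j _ => ?_
      field_simp [norm_ne_zero_iff.mpr (hw k)]

end Gershgorin

theorem IsMetzler.isHurwitz_of_mulVec_neg {n : ℕ} {A : Matrix (Fin n) (Fin n) ℝ}
    (hA : IsMetzler A) {d : Fin n → ℝ} (hd : ∀ i, 0 < d i) (hAd : ∀ i, (A *ᵥ d) i < 0) :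
    IsHurwitz A := by
  intro μ hμ
  obtain ⟨k, hk⟩ := exists_norm_sub_diag_mul_le_of_mem_spectrum hμ
    (w := fun i => (d i : ℂ)) fun i => Complex.ofReal_ne_zero.mpr (hd i).ne'
  simp only [map_apply, Complex.norm_real, Real.norm_of_nonneg (hd _).le, Real.norm_eq_abs] at hk
  have hoff : ∑ j ∈ Finset.univ.erase k, |A k j| * d j = (A *ᵥ d) k - A k k * d k := by
    rw [mulVec, dotProduct, ← Finset.add_sum_erase _ _ (Finset.mem_univ k), add_sub_cancel_left]
    refine Finset.sum_congr rfl fun j hj => ?_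
    rw [abs_of_nonneg (hA k j (Finset.ne_of_mem_erase hj).symm)]
  have hre : μ.re - A k k ≤ ‖μ - A k k‖ := by
    simpa using Complex.re_le_norm (μ - A k k)
  have hre_mul : μ.re * d k < 0 := by
    linarith [mul_le_mul_of_nonneg_right hre (hd k).le, hAd k]
  exact neg_of_mul_neg_left hre_mul (hd k).le

noncomputable def insulinMatrix (k₂ k₆ h₂ h₆ k₇ : ℝ) : Matrix (Fin 7) (Fin 7) ℝ :=
  !![-173/100,  173/100,                         0,        0,        0,         0,                                  0;
      227/500, -3151/1000 - h₂ * k₂ / Real.exp k₇, 0,      909/1000, 727/1000,  53/50 - h₂ * k₆ / Real.exp k₇,      h₂;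
      0,        153/200,                        -153/200,  0,        0,         0,                                  0;
      0,        47/500,                          189/500, -789/1000, 0,         0,                                  0;
      0,        1411/1000,                       0,        0,       -367/200,   0,                                  0;
      0,        709/500 - h₆ * k₂ / Real.exp k₇, 0,        0,        0,        -23158/13875 - h₆ * k₆ / Real.exp k₇, h₆;
      0,        k₂,                              0,        0,        0,         k₆,                                -Real.exp k₇]

noncomputable def insulinWeight (k₂ k₆ h₂ h₆ k₇ : ℝ) : Fin 7 → ℝ :=
  ![6, 5, 6, 4, 4, 5, 5 * (k₂ + k₆) / Real.exp k₇ + (1 + h₂ + h₆)⁻¹]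

section InsulinMatrix

variable {k₂ k₆ h₂ h₆ : ℝ} (k₇ : ℝ)

theorem isMetzler_insulinMatrix (hk₂ : 0 ≤ k₂) (hk₆ : 0 ≤ k₆) (hh₂ : 0 ≤ h₂) (hh₆ : 0 ≤ h₆)
    (hc₁ : 0 ≤ 709/500 - h₆ * k₂ / Real.exp k₇) (hc₂ : 0 ≤ 53/50 - h₂ * k₆ / Real.exp k₇) :
    IsMetzler (insulinMatrix k₂ k₆ h₂ h₆ k₇) := by
  intro i j hij
  fin_cases i <;> fin_cases j <;> first | exact absurd rfl hij | norm_num [insulinMatrix, *]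

theorem insulinWeight_pos (hk₂ : 0 ≤ k₂) (hk₆ : 0 ≤ k₆) (hh₂ : 0 ≤ h₂) (hh₆ : 0 ≤ h₆) :
    ∀ i, 0 < insulinWeight k₂ k₆ h₂ h₆ k₇ i := by
  have hlast : 0 < 5 * (k₂ + k₆) / Real.exp k₇ + (1 + h₂ + h₆)⁻¹ :=
    add_pos_of_nonneg_of_pos (by positivity) (inv_pos.mpr (by linarith))
  intro i
  fin_cases i <;> simp [insulinWeight, hlast]

theorem insulinMatrix_mulVec_insulinWeight_neg (hh₂ : 0 ≤ h₂) (hh₆ : 0 ≤ h₆) :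
    ∀ i, (insulinMatrix k₂ k₆ h₂ h₆ k₇ *ᵥ insulinWeight k₂ k₆ h₂ h₆ k₇) i < 0 := by
  have hs : 0 < 1 + h₂ + h₆ := by linarith
  have ht₂ : h₂ * (1 + h₂ + h₆)⁻¹ < 1 := by rw [← div_eq_mul_inv, div_lt_one hs]; linarith
  have ht₆ : h₆ * (1 + h₂ + h₆)⁻¹ < 1 := by rw [← div_eq_mul_inv, div_lt_one hs]; linarith
  have hE : Real.exp k₇ * (5 * (k₂ + k₆) * (Real.exp k₇)⁻¹) = 5 * (k₂ + k₆) := by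
    field_simp
  have hEt : 0 < Real.exp k₇ * (1 + h₂ + h₆)⁻¹ := by positivity
  intro i
  fin_cases i <;>
    simp [insulinMatrix, insulinWeight, mulVec, dotProduct, Fin.sum_univ_succ, div_eq_mul_inv] <;>
    linarith

end InsulinMatrix

theorem insulin_family_metzler_hurwitz
    (k₂ k₆ h₂ h₆ : ℝ) (k₇ : ℝ)
    (hk₂ : 0 ≤ k₂) (hk₆ : 0 ≤ k₆) (hh₂ : 0 ≤ h₂) (hh₆ : 0 ≤ h₆)
    (hc₁ : 0 ≤ 709/500 - h₆ * k₂ / Real.exp k₇)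
    (hc₂ : 0 ≤ 53/50 - h₂ * k₆ / Real.exp k₇) :
    IsMetzler
      !![-173/100,  173/100,                         0,        0,        0,         0,                                  0;
          227/500, -3151/1000 - h₂ * k₂ / Real.exp k₇, 0,      909/1000, 727/1000,  53/50 - h₂ * k₆ / Real.exp k₇,      h₂;
          0,        153/200,                        -153/200,  0,        0,         0,                                  0;
          0,        47/500,                          189/500, -789/1000, 0,         0,                                  0;
          0,        1411/1000,                       0,        0,       -367/200,   0,                                  0;
          0,        709/500 - h₆ * k₂ / Real.exp k₇, 0,        0,        0,        -23158/13875 - h₆ * k₆ / Real.exp k₇, h₆;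
          0,        k₂,                              0,        0,        0,         k₆,                                -Real.exp k₇] ∧
    IsHurwitz
      !![-173/100,  173/100,                         0,        0,        0,         0,                                  0;
          227/500, -3151/1000 - h₂ * k₂ / Real.exp k₇, 0,      909/1000, 727/1000,  53/50 - h₂ * k₆ / Real.exp k₇,      h₂;
          0,        153/200,                        -153/200,  0,        0,         0,                                  0;
          0,        47/500,                          189/500, -789/1000, 0,         0,                                  0;
          0,        1411/1000,                       0,        0,       -367/200,   0,                                  0;
          0,        709/500 - h₆ * k₂ / Real.exp k₇, 0,        0,        0,        -23158/13875 - h₆ * k₆ / Real.exp k₇, h₆;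
          0,        k₂,                              0,        0,        0,         k₆,                                -Real.exp k₇] := by
  have hMetzler : IsMetzler (insulinMatrix k₂ k₆ h₂ h₆ k₇) :=
    isMetzler_insulinMatrix k₇ hk₂ hk₆ hh₂ hh₆ hc₁ hc₂
  exact ⟨hMetzler, hMetzler.isHurwitz_of_mulVec_neg (insulinWeight_pos k₇ hk₂ hk₆ hh₂ hh₆)
    (insulinMatrix_mulVec_insulinWeight_neg k₇ hh₂ hh₆)⟩
end
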